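/- Moreover, in the combinatorial lemma the choice of balanced element is determined by the sign of μ_n: if 1 - |μ_n| ≤ -(n+d) ≤ |μ_n| - 1 and μ_n ≥ 1 then (w⁺)⁻¹ · (d e₀ + μ) is dominant, while if μ_n ≤ -1 then (w⁻)⁻¹ · (d e₀ + μ) is dominant. -/

import Mathlib

/-- `(w⁺)⁻¹`: `e_{i+1} ↦ e_i` for `0 ≤ i ≤ n-1`, `e₀ ↦ e_n`, acting on `ℤ^{n+1}`. -/
def winvPlus (n : ℕ) : (Fin (n+1) → ℤ) → (Fin (n+1) → ℤ) :=
  fun v j => if h : (j : ℕ) = n then v 0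
    else v ⟨(j : ℕ) + 1, by have := j.isLt; omega⟩

/-- `(w⁻)⁻¹`: `e_{i+1} ↦ e_i` for `0 ≤ i ≤ n-2`, `e_n ↦ -e_{n-1}`, `e₀ ↦ -e_n`. -/
def winvMinus (n : ℕ) : (Fin (n+1) → ℤ) → (Fin (n+1) → ℤ) :=
  fun v j => if h : (j : ℕ) = n then -(v 0)
    else if h2 : (j : ℕ) = n - 1 then -(v (Fin.last n))
    else v ⟨(j : ℕ) + 1, by have := j.isLt; omega⟩

/-- `ρ = Σ_{j=0}^{n} (n-j) e_j`. -/
def rhoZ (n : ℕ) : Fin (n+1) → ℤ := fun j => (n : ℤ) - (j : ℕ)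

/-- The weight `d e₀ + Σ_{j=1}^n μ_j e_j` as a vector in `ℤ^{n+1}`. -/
def lamvec (n : ℕ) (d : ℤ) (μ : Fin n → ℤ) : Fin (n+1) → ℤ :=
  fun i => if h : (i : ℕ) = 0 then d
    else μ ⟨(i : ℕ) - 1, by have := i.isLt; omega⟩

/-- Dominance: `λ₀ ≥ λ₁ ≥ ⋯ ≥ λ_{n-1} ≥ |λ_n|`. -/
def DominantZ (n : ℕ) (l : Fin (n+1) → ℤ) : Prop :=
  (∀ k : Fin n, l k.succ ≤ l k.castSucc) ∧
  |l (Fin.last n)| ≤ l ⟨n - 1, by omega⟩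

lemma lamvec_pos (n : ℕ) (d : ℤ) (μ : Fin n → ℤ) (i : Fin (n+1)) (hi : (i : ℕ) ≠ 0) :
    lamvec n d μ i = μ ⟨(i : ℕ) - 1, by have := i.isLt; omega⟩ := dif_neg hi

lemma lamvec_zero (n : ℕ) (d : ℤ) (μ : Fin n → ℤ) (i : Fin (n+1)) (hi : (i : ℕ) = 0) :
    lamvec n d μ i = d := dif_pos hi

lemma plus_lt (n : ℕ) (d : ℤ) (μ : Fin n → ℤ) (j : Fin (n+1)) (hj : (j : ℕ) < n) :
    (winvPlus n (lamvec n d μ + rhoZ n) - rhoZ n) j = μ ⟨j, hj⟩ - 1 := by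
  simp only [Pi.sub_apply, Pi.add_apply, winvPlus]
  rw [dif_neg (by omega), lamvec_pos _ _ _ _ (by simp)]
  simp only [rhoZ]
  have h2 : (⟨((⟨(j:ℕ)+1, by omega⟩ : Fin (n+1)):ℕ)-1, by simp; omega⟩ : Fin n) = ⟨j, hj⟩ := by simp
  rw [h2]
  have : (((⟨(j:ℕ)+1, by omega⟩ : Fin (n+1)):ℕ) : ℤ) = (j:ℕ) + 1 := by simp
  rw [this]; ring

lemma plus_eq (n : ℕ) (d : ℤ) (μ : Fin n → ℤ) (j : Fin (n+1)) (hj : (j : ℕ) = n) :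
    (winvPlus n (lamvec n d μ + rhoZ n) - rhoZ n) j = d + n := by
  simp only [Pi.sub_apply, Pi.add_apply, winvPlus]
  rw [dif_pos hj, lamvec_zero _ _ _ _ (by simp)]
  simp [rhoZ, hj]

lemma minus_lt (n : ℕ) (d : ℤ) (μ : Fin n → ℤ) (j : Fin (n+1)) (hj : (j : ℕ) < n - 1) :
    (winvMinus n (lamvec n d μ + rhoZ n) - rhoZ n) j = μ ⟨j, by omega⟩ - 1 := by
  simp only [Pi.sub_apply, Pi.add_apply, winvMinus]
  rw [dif_neg (by omega), dif_neg (by omega), lamvec_pos _ _ _ _ (by simp)]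
  simp only [rhoZ]
  have h2 : (⟨((⟨(j:ℕ)+1, by omega⟩ : Fin (n+1)):ℕ)-1, by simp; omega⟩ : Fin n) = ⟨j, by omega⟩ := by simp
  rw [h2]
  have : (((⟨(j:ℕ)+1, by omega⟩ : Fin (n+1)):ℕ) : ℤ) = (j:ℕ) + 1 := by simp
  rw [this]; ring

lemma minus_mid (n : ℕ) (hn : 1 ≤ n) (d : ℤ) (μ : Fin n → ℤ) (j : Fin (n+1)) (hj : (j : ℕ) = n - 1) :
    (winvMinus n (lamvec n d μ + rhoZ n) - rhoZ n) j = -(μ ⟨n-1, by omega⟩) - 1 := by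
  simp only [Pi.sub_apply, Pi.add_apply, winvMinus]
  rw [dif_neg (by omega), dif_pos hj,
    lamvec_pos _ _ _ (Fin.last n) (by simp [Fin.last]; omega)]
  simp only [rhoZ, Fin.val_last, hj]
  push_cast [Nat.cast_sub hn]
  ring

lemma minus_eq (n : ℕ) (d : ℤ) (μ : Fin n → ℤ) (j : Fin (n+1)) (hj : (j : ℕ) = n) :
    (winvMinus n (lamvec n d μ + rhoZ n) - rhoZ n) j = -(d + n) := by
  simp only [Pi.sub_apply, Pi.add_apply, winvMinus]
  rw [dif_pos hj, lamvec_zero _ _ _ _ (by simp)]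
  simp [rhoZ, hj]

lemma mu_step (n : ℕ) (hn : 2 ≤ n) (μ : Fin n → ℤ)
    (hmono : ∀ i j : Fin n, i ≤ j → (j : ℕ) + 1 < n → μ j ≤ μ i)
    (hlast : |μ ⟨n - 1, Nat.sub_lt (by omega) Nat.one_pos⟩| ≤ μ ⟨n - 2, Nat.sub_lt (by omega) Nat.two_pos⟩) :
    ∀ a : ℕ, ∀ h : a + 1 < n, μ ⟨a + 1, h⟩ ≤ μ ⟨a, by omega⟩ := by
  intro a h
  by_cases hc : a + 2 = n
  · have e1 : μ (⟨a + 1, h⟩ : Fin n) = μ ⟨n - 1, Nat.sub_lt (by omega) Nat.one_pos⟩ :=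
      congrArg μ (Fin.ext (by simp only []; omega))
    have e2 : μ (⟨a, by omega⟩ : Fin n) = μ ⟨n - 2, Nat.sub_lt (by omega) Nat.two_pos⟩ :=
      congrArg μ (Fin.ext (by simp only []; omega))
    have := le_abs_self (μ ⟨n - 1, Nat.sub_lt (by omega) Nat.one_pos⟩)
    rw [e1, e2]; linarith
  · exact hmono ⟨a, by omega⟩ ⟨a + 1, h⟩ (by simp only [Fin.mk_le_mk]; omega)
      (by simp only []; omega)

/-- under `1 - |μ_n| ≤ -(n+d) ≤ |μ_n| - 1`, the sign of `μ_n`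
determines the balanced element: if `μ_n ≥ 1` then `(w⁺)⁻¹ · (d e₀ + μ)` is
dominant, and if `μ_n ≤ -1` then `(w⁻)⁻¹ · (d e₀ + μ)` is dominant. -/
theorem stmt14 (n : ℕ) (hn : 2 ≤ n) (hne : Even n) (d : ℤ) (μ : Fin n → ℤ)
    (hmono : ∀ i j : Fin n, i ≤ j → (j : ℕ) + 1 < n → μ j ≤ μ i)
    (hlast : |μ ⟨n - 1, by omega⟩| ≤ μ ⟨n - 2, by omega⟩)
    (hmin : 1 ≤ |μ ⟨n - 1, by omega⟩|)
    (hineq : 1 - |μ ⟨n - 1, by omega⟩| ≤ -((n : ℤ) + d) ∧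
      -((n : ℤ) + d) ≤ |μ ⟨n - 1, by omega⟩| - 1) :
    (1 ≤ μ ⟨n - 1, by omega⟩ →
      DominantZ n (winvPlus n (lamvec n d μ + rhoZ n) - rhoZ n)) ∧
    (μ ⟨n - 1, by omega⟩ ≤ -1 →
      DominantZ n (winvMinus n (lamvec n d μ + rhoZ n) - rhoZ n)) := by
  obtain ⟨h1, h2⟩ := hineq
  have step := mu_step n hn μ hmono hlast
  have hn1 : n - 1 < n := by omega
  have hn2 : n - 2 < n := by omega
  have hn1' : n - 1 < n + 1 := by omega
  have hrw : ∀ p : n - 1 < n, μ ⟨n - 1, p⟩ = μ ⟨n - 1, hn1⟩ := fun _ => rfl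
  have hrw2 : ∀ p : n - 2 < n, μ ⟨n - 2, p⟩ = μ ⟨n - 2, hn2⟩ := fun _ => rfl
  rw [hrw, hrw2] at hlast
  rw [hrw] at hmin h1 h2
  constructor
  · intro hpos
    rw [hrw] at hpos
    rw [abs_of_pos (by linarith : (0:ℤ) < μ ⟨n-1, hn1⟩)] at h1 h2
    constructor
    · intro k
      have hkl : (k : ℕ) < n := k.isLt
      by_cases hk : (k : ℕ) + 1 = n
      · rw [plus_eq n d μ k.succ hk, plus_lt n d μ k.castSucc hkl]
        simp only [Fin.coe_castSucc]
        rw [(congrArg μ (Fin.mk_eq_mk.mpr (by omega)) :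
            μ (⟨(k : ℕ), hkl⟩ : Fin n) = μ ⟨n - 1, hn1⟩)]
        linarith
      · have hks : (k : ℕ) + 1 < n := by omega
        rw [plus_lt n d μ k.succ hks, plus_lt n d μ k.castSucc hkl]
        simp only [Fin.val_succ, Fin.coe_castSucc]
        have hstep : μ ⟨(k : ℕ) + 1, hks⟩ ≤ μ ⟨(k : ℕ), hkl⟩ := step (k : ℕ) hks
        linarith
    · rw [plus_eq n d μ (Fin.last n) rfl, plus_lt n d μ ⟨n - 1, hn1'⟩ hn1, abs_le]
      constructor <;> linarith
  · intro hneg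
    rw [hrw] at hneg
    rw [abs_of_neg (by linarith : μ ⟨n-1, hn1⟩ < 0)] at h1 h2
    constructor
    · intro k
      have hkl : (k : ℕ) < n := k.isLt
      by_cases hk : (k : ℕ) + 1 = n
      · have hc : ((k.castSucc : Fin (n+1)) : ℕ) = n - 1 := by
          simp only [Fin.coe_castSucc]; omega
        rw [minus_eq n d μ k.succ hk, minus_mid n (by omega) d μ k.castSucc hc, hrw]
        linarith
      · by_cases hk2 : (k : ℕ) + 2 = n
        · have hc : ((k.succ : Fin (n+1)) : ℕ) = n - 1 := by
            simp only [Fin.val_succ]; omega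
          have hkm : (k : ℕ) < n - 1 := by omega
          rw [minus_mid n (by omega) d μ k.succ hc, minus_lt n d μ k.castSucc hkm, hrw]
          simp only [Fin.coe_castSucc]
          rw [(congrArg μ (Fin.mk_eq_mk.mpr (by omega)) :
              μ (⟨(k : ℕ), hkl⟩ : Fin n) = μ ⟨n - 2, hn2⟩)]
          have hml : -(μ ⟨n - 1, hn1⟩) ≤ μ ⟨n - 2, hn2⟩ :=
            le_trans (neg_le_abs _) hlast
          linarith
        · have hks : (k : ℕ) + 1 < n - 1 := by omega
          have hks' : (k : ℕ) + 1 < n := by omega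
          have hkm : (k : ℕ) < n - 1 := by omega
          rw [minus_lt n d μ k.succ hks, minus_lt n d μ k.castSucc hkm]
          simp only [Fin.val_succ, Fin.coe_castSucc]
          have hstep : μ ⟨(k : ℕ) + 1, hks'⟩ ≤ μ ⟨(k : ℕ), hkl⟩ := step (k : ℕ) hks'
          linarith
    · rw [minus_eq n d μ (Fin.last n) rfl, minus_mid n (by omega) d μ ⟨n - 1, hn1'⟩ rfl,
        hrw, abs_le]
      constructor <;> linarith
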